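/- Let (X,d) be a compact metric space and f_{0,∞} = {f_n}_{n=0}^∞ a sequence of continuous self-maps of X. Then (X, f_{0,∞}) is topologically mixing if and only if the induced system (𝓜(X), f̂_{0,∞}) is topologically mixing. -/

import Mathlib

open MeasureTheory Filter

/-- `nacomp f n = f_{n-1} ∘ ⋯ ∘ f_0` (with `nacomp f 0 = id`): the time-`n` map of the
non-autonomous system `(X, f_{0,∞})`. -/
def nacomp {Y : Type*} (f : ℕ → Y → Y) : ℕ → Y → Y
  | 0 => id
  | n + 1 => f n ∘ nacomp f n

/-- The induced pushforward map `f̂` on the space `𝓜(X)` of Borel probability measures,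
equipped with the Lévy–Prokhorov metric. -/
noncomputable def inducedMap {X : Type*} [MetricSpace X] [MeasurableSpace X] [BorelSpace X]
    (f : X → X) (hf : Continuous f) :
    LevyProkhorov (ProbabilityMeasure X) → LevyProkhorov (ProbabilityMeasure X) :=
  fun μ => (LevyProkhorov.toMeasureEquiv (α := ProbabilityMeasure X)).symm
    (((LevyProkhorov.toMeasureEquiv (α := ProbabilityMeasure X)) μ).map hf.measurable.aemeasurable)

/-- Topological mixing of the non-autonomous system given by the maps `f n`. -/
def NAMixing {Y : Type*} [TopologicalSpace Y] (f : ℕ → Y → Y) : Prop :=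
  ∀ U V : Set Y, IsOpen U → IsOpen V → U.Nonempty → V.Nonempty →
    ∃ N, 1 ≤ N ∧ ∀ n, N ≤ n → (nacomp f n '' U ∩ V).Nonempty

section AuxLemmas

open Metric Set
open scoped ENNReal NNReal Classical

set_option linter.unusedSectionVars false

lemma nacomp_continuous {Y : Type*} [TopologicalSpace Y] {f : ℕ → Y → Y}
    (hf : ∀ n, Continuous (f n)) : ∀ n, Continuous (nacomp f n)
  | 0 => continuous_id
  | n + 1 => ((hf n).comp (nacomp_continuous hf n) : _)

lemma nacomp_induced {X : Type*} [MetricSpace X] [MeasurableSpace X] [BorelSpace X]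
    (f : ℕ → X → X) (hf : ∀ n, Continuous (f n)) (n : ℕ)
    (μ : LevyProkhorov (ProbabilityMeasure X)) :
    (LevyProkhorov.toMeasureEquiv (α := ProbabilityMeasure X)
        (nacomp (fun m => inducedMap (f m) (hf m)) n μ) : Measure X)
      = (LevyProkhorov.toMeasureEquiv (α := ProbabilityMeasure X) μ : Measure X).map (nacomp f n) := by
  induction n with
  | zero =>
      show (LevyProkhorov.toMeasureEquiv (α := ProbabilityMeasure X) μ : Measure X) = _
      rw [show nacomp f 0 = id from rfl, Measure.map_id]
  | succ n ih =>
      show ((LevyProkhorov.toMeasureEquiv (α := ProbabilityMeasure X)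
          (nacomp (fun m => inducedMap (f m) (hf m)) n μ)).map
            (hf n).measurable.aemeasurable : Measure X) = _
      rw [ProbabilityMeasure.toMeasure_map, ih,
        Measure.map_map (hf n).measurable ((nacomp_continuous hf n).measurable)]
      rfl

variable {X : Type*} [MetricSpace X] [MeasurableSpace X] [BorelSpace X]

/-- A finitely supported measure `∑ i, c i • δ_{u i}`. -/
noncomputable def disc {ι : Type*} [Fintype ι] (c : ι → ℝ≥0∞) (u : ι → X) : Measure X :=
  ∑ i, c i • Measure.dirac (u i)

lemma disc_apply {ι : Type*} [Fintype ι] (c : ι → ℝ≥0∞) (u : ι → X) {B : Set X}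
    (hB : MeasurableSet B) :
    disc c u B = ∑ i, if u i ∈ B then c i else 0 := by
  classical
  simp only [disc, Measure.coe_finset_sum, Finset.sum_apply, Measure.smul_apply, smul_eq_mul,
    Measure.dirac_apply' _ hB, Set.indicator_apply, Pi.one_apply, mul_ite, mul_one, mul_zero]

lemma disc_prob {ι : Type*} [Fintype ι] {c : ι → ℝ≥0∞} {u : ι → X} (hc : ∑ i, c i = 1) :
    IsProbabilityMeasure (disc c u) := by
  constructor
  rw [disc_apply _ _ MeasurableSet.univ]
  simpa using hc

lemma disc_map {ι : Type*} [Fintype ι] (c : ι → ℝ≥0∞) (u : ι → X) {g : X → X}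
    (hg : Measurable g) : (disc c u).map g = disc c (fun i => g (u i)) := by
  ext B hB
  rw [Measure.map_apply hg hB, disc_apply _ _ (hg hB), disc_apply _ _ hB]
  rfl

lemma dist_disc_le {ι : Type*} [Fintype ι] (c : ι → ℝ≥0∞) (u u' : ι → X) {δ : ℝ} (hδ : 0 ≤ δ)
    (h : ∀ i, dist (u' i) (u i) ≤ δ) (hc : ∑ i, c i = 1) :
    levyProkhorovDist (disc c u) (disc c u') ≤ δ := by
  have := disc_prob (u := u) hc
  have := disc_prob (u := u') hc
  apply levyProkhorovDist_le_of_forall_le _ _ hδ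
  intro ε B hε hB
  rw [disc_apply _ _ hB]
  refine le_trans ?_ (le_add_right le_rfl)
  rw [disc_apply _ _ isOpen_thickening.measurableSet]
  refine Finset.sum_le_sum fun i _ => ?_
  by_cases hi : u i ∈ B
  · have : u' i ∈ thickening ε B := mem_thickening_iff.2 ⟨u i, hi, lt_of_le_of_lt (h i) hε⟩
    simp [hi, this]
  · simp [hi]

lemma exists_disc_approx [CompactSpace X] [Nonempty X] (μ : Measure X) [IsProbabilityMeasure μ]
    {δ : ℝ} (hδ : 0 < δ) :
    ∃ (k : ℕ) (u : Fin k → X) (c : Fin k → ℝ≥0∞), (∑ i, c i) = 1 ∧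
      levyProkhorovDist μ (disc c u) ≤ δ := by
  obtain ⟨t, -, t_fin, hcov⟩ :=
    finite_cover_balls_of_compact (isCompact_univ (X := X)) (half_pos hδ)
  lift t to Finset X using t_fin
  set k := t.card with hk
  let e := t.equivFin
  let p : ℕ → X := fun n => if h : n < k then (e.symm ⟨n, h⟩ : X) else Classical.arbitrary X
  have hcov' : ∀ x : X, ∃ n, n < k ∧ x ∈ ball (p n) (δ / 2) := by
    intro x
    obtain ⟨y, hy, hxy⟩ := Set.mem_iUnion₂.1 (hcov (Set.mem_univ x))
    refine ⟨e ⟨y, hy⟩, (e ⟨y, hy⟩).2, ?_⟩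
    have : p (e ⟨y, hy⟩) = y := by
      simp only [p, dif_pos (e ⟨y, hy⟩).2]
      norm_num
      intro hk'
      exact absurd (e ⟨y, hy⟩).2 (not_lt.2 hk')
    rwa [this]
  set E : ℕ → Set X := disjointed (fun n => ball (p n) (δ / 2)) with hE
  have E_sub : ∀ n, E n ⊆ ball (p n) (δ / 2) := fun n => disjointed_subset _ n
  have E_mble : ∀ n, MeasurableSet (E n) :=
    MeasurableSet.disjointed fun n => measurableSet_ball
  have E_disj : Pairwise (Function.onFun Disjoint E) := disjoint_disjointed _
  have E_empty : ∀ n, k ≤ n → E n = ∅ := by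
    intro n hn
    rw [hE, disjointed_eq_inter_compl]
    ext x
    simp only [Set.mem_inter_iff, Set.mem_iInter, Set.mem_compl_iff, Set.mem_empty_iff_false,
      iff_false, not_and]
    intro _ hx
    obtain ⟨m, hm, hxm⟩ := hcov' x
    exact absurd hxm (by simpa using hx m (lt_of_lt_of_le hm hn))
  have E_cover : ∀ x : X, ∃ n, n < k ∧ x ∈ E n := by
    intro x
    have : x ∈ ⋃ n, E n := by
      rw [hE, iUnion_disjointed]
      obtain ⟨n, _, hn⟩ := hcov' x
      exact Set.mem_iUnion.2 ⟨n, hn⟩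
    obtain ⟨n, hn⟩ := Set.mem_iUnion.1 this
    refine ⟨n, ?_, hn⟩
    by_contra h
    rw [E_empty n (le_of_not_gt h)] at hn
    exact hn
  have hsum : (∑ i : Fin k, μ (E i)) = 1 := by
    have huniv : (⋃ i ∈ Finset.range k, E i) = Set.univ := by
      ext x
      simp only [Set.mem_iUnion, Finset.mem_range, Set.mem_univ, iff_true]
      obtain ⟨n, hn, hx⟩ := E_cover x
      exact ⟨n, hn, hx⟩
    rw [Fin.sum_univ_eq_sum_range (fun n => μ (E n)) k,
      ← measure_biUnion_finset (fun i _ j _ hij => E_disj hij) (fun i _ => E_mble i), huniv,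
      measure_univ]
  refine ⟨k, fun i => p i, fun i => μ (E i), hsum, ?_⟩
  haveI := disc_prob (u := fun i : Fin k => p i) hsum
  apply levyProkhorovDist_le_of_forall_le _ _ hδ.le
  intro ε B hε hB
  have hBdec : B = ⋃ i ∈ Finset.range k, (B ∩ E i) := by
    ext x
    simp only [Set.mem_iUnion, Finset.mem_range, Set.mem_inter_iff]
    constructor
    · intro hx
      obtain ⟨n, hn, hxn⟩ := E_cover x
      exact ⟨n, hn, hx, hxn⟩
    · rintro ⟨n, -, hx, -⟩; exact hx
  have step1 : μ B = ∑ i ∈ Finset.range k, μ (B ∩ E i) := by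
    conv_lhs => rw [hBdec]
    exact measure_biUnion_finset
      (fun i _ j _ hij => ((E_disj hij).mono Set.inter_subset_right Set.inter_subset_right))
      (fun i _ => hB.inter (E_mble i))
  rw [step1]
  refine le_trans ?_ (le_add_right le_rfl)
  rw [disc_apply _ _ isOpen_thickening.measurableSet,
    Fin.sum_univ_eq_sum_range (fun n => if p n ∈ thickening ε B then μ (E n) else 0) k]
  refine Finset.sum_le_sum fun i _ => ?_
  rcases (B ∩ E i).eq_empty_or_nonempty with hemp | ⟨x, hxB, hxE⟩
  · simp [hemp]
  · have hpi : p i ∈ thickening ε B := by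
      refine mem_thickening_iff.2 ⟨x, hxB, ?_⟩
      have := E_sub i hxE
      rw [mem_ball, dist_comm] at this
      linarith [this]
    rw [if_pos hpi]
    exact measure_mono Set.inter_subset_right

end AuxLemmas

/-- `(X, f_{0,∞})` is topologically mixing iff the induced system `(𝓜(X), f̂_{0,∞})` is
topologically mixing. -/
theorem mixing_iff_induced_mixing
    {X : Type*} [MetricSpace X] [CompactSpace X] [MeasurableSpace X] [BorelSpace X]
    (f : ℕ → X → X) (hf : ∀ n, Continuous (f n)) :
    NAMixing f ↔ NAMixing (fun n => inducedMap (f n) (hf n)) := by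
  constructor
  · -- base mixing implies induced mixing
    intro h U V hUopen hVopen hUne hVne
    obtain ⟨μ0, hμ0⟩ := hUne
    obtain ⟨ν0, hν0⟩ := hVne
    haveI hXne : Nonempty X := by
      by_contra hX
      have h1 : (LevyProkhorov.toMeasureEquiv (α := ProbabilityMeasure X) μ0 : Measure X) Set.univ = 1 :=
        measure_univ
      rw [Set.univ_eq_empty_iff.2 (not_nonempty_iff.1 hX), measure_empty] at h1
      exact zero_ne_one h1
    obtain ⟨ε, hε, hball⟩ := Metric.isOpen_iff.1 hUopen μ0 hμ0
    obtain ⟨ε', hε', hball'⟩ := Metric.isOpen_iff.1 hVopen ν0 hν0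
    set δ : ℝ := min ε ε' / 3 with hδdef
    have hδ : 0 < δ := by
      have := lt_min hε hε'
      simp only [hδdef]
      linarith
    obtain ⟨k, p, w, hw, hdist1⟩ :=
      exists_disc_approx (LevyProkhorov.toMeasureEquiv (α := ProbabilityMeasure X) μ0 : Measure X) hδ
    obtain ⟨m, q, v, hv, hdist2⟩ :=
      exists_disc_approx (LevyProkhorov.toMeasureEquiv (α := ProbabilityMeasure X) ν0 : Measure X) hδ
    have hpair : ∀ ij : Fin k × Fin m, ∃ N, 1 ≤ N ∧ ∀ n, N ≤ n →
        ((nacomp f n '' Metric.ball (p ij.1) δ) ∩ Metric.ball (q ij.2) δ).Nonempty :=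
      fun ij => h _ _ Metric.isOpen_ball Metric.isOpen_ball
        ⟨p ij.1, Metric.mem_ball_self hδ⟩ ⟨q ij.2, Metric.mem_ball_self hδ⟩
    choose Nf hNf1 hNf2 using hpair
    refine ⟨max 1 (Finset.univ.sup Nf), le_max_left _ _, fun n hn => ?_⟩
    have hz : ∀ ij : Fin k × Fin m, ∃ x, x ∈ Metric.ball (p ij.1) δ ∧
        nacomp f n x ∈ Metric.ball (q ij.2) δ := by
      intro ij
      obtain ⟨y, ⟨x, hx, hxy⟩, hy⟩ := hNf2 ij n
        (le_trans (le_trans (Finset.le_sup (Finset.mem_univ ij)) (le_max_right _ _)) hn)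
      exact ⟨x, hx, hxy ▸ hy⟩
    choose z hz1 hz2 using hz
    set c : Fin k × Fin m → ENNReal := fun ij => w ij.1 * v ij.2 with hc
    have hcsum : ∑ ij, c ij = 1 := by
      rw [← Finset.univ_product_univ, Finset.sum_product]
      simp_rw [hc, ← Finset.mul_sum, hv, mul_one]
      exact hw
    have hD1 : disc c (fun ij => p ij.1) = disc w p := by
      ext B hB
      rw [disc_apply _ _ hB, disc_apply _ _ hB, ← Finset.univ_product_univ, Finset.sum_product]
      refine Finset.sum_congr rfl fun i _ => ?_
      by_cases hiB : p i ∈ B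
      · simp only [hiB, if_true, hc, ← Finset.mul_sum, hv, mul_one]
      · simp [hiB]
    have hD2 : disc c (fun ij => q ij.2) = disc v q := by
      ext B hB
      rw [disc_apply _ _ hB, disc_apply _ _ hB, ← Finset.univ_product_univ,
        Finset.sum_product_right]
      refine Finset.sum_congr rfl fun j _ => ?_
      by_cases hjB : q j ∈ B
      · simp only [hjB, if_true, hc]
        rw [← Finset.sum_mul, hw, one_mul]
      · simp [hjB]
    set σ : LevyProkhorov (ProbabilityMeasure X) :=
      (LevyProkhorov.toMeasureEquiv (α := ProbabilityMeasure X)).symm ⟨disc c z, disc_prob hcsum⟩ with hσ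
    set D1 : LevyProkhorov (ProbabilityMeasure X) :=
      (LevyProkhorov.toMeasureEquiv (α := ProbabilityMeasure X)).symm ⟨disc w p, disc_prob hw⟩ with hD1pt
    set D2 : LevyProkhorov (ProbabilityMeasure X) :=
      (LevyProkhorov.toMeasureEquiv (α := ProbabilityMeasure X)).symm ⟨disc v q, disc_prob hv⟩ with hD2pt
    have hδε : 2 * δ < ε := by
      have h1 : δ ≤ ε / 3 := by
        simp only [hδdef]
        have := min_le_left ε ε'
        linarith
      linarith
    have hδε' : 2 * δ < ε' := by
      have h1 : δ ≤ ε' / 3 := by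
        simp only [hδdef]
        have := min_le_right ε ε'
        linarith
      linarith
    have hσU : σ ∈ U := by
      apply hball
      rw [Metric.mem_ball]
      have h1 : dist σ D1 ≤ δ := by
        show levyProkhorovDist (disc c z) (disc w p) ≤ δ
        rw [← hD1]
        exact dist_disc_le c z (fun ij => p ij.1) hδ.le
          (fun ij => by
            have := hz1 ij
            rw [Metric.mem_ball] at this
            rw [dist_comm]
            exact this.le) hcsum
      have h2 : dist D1 μ0 ≤ δ := by
        rw [dist_comm]
        show levyProkhorovDist (LevyProkhorov.toMeasureEquiv (α := ProbabilityMeasure X) μ0 : Measure X)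
          (disc w p) ≤ δ
        exact hdist1
      calc dist σ μ0 ≤ dist σ D1 + dist D1 μ0 := dist_triangle _ _ _
        _ ≤ δ + δ := add_le_add h1 h2
        _ < ε := by linarith
    refine ⟨nacomp (fun m' => inducedMap (f m') (hf m')) n σ, ⟨σ, hσU, rfl⟩, ?_⟩
    apply hball'
    rw [Metric.mem_ball]
    set T := nacomp (fun m' => inducedMap (f m') (hf m')) n σ with hT
    have hTmeas : (LevyProkhorov.toMeasureEquiv (α := ProbabilityMeasure X) T : Measure X)
        = disc c (fun ij => nacomp f n (z ij)) := by
      rw [hT, nacomp_induced f hf n σ]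
      show (disc c z).map (nacomp f n) = _
      exact disc_map c z ((nacomp_continuous hf n).measurable)
    have h1 : dist T D2 ≤ δ := by
      show levyProkhorovDist (LevyProkhorov.toMeasureEquiv (α := ProbabilityMeasure X) T : Measure X)
        (disc v q) ≤ δ
      rw [hTmeas, ← hD2]
      exact dist_disc_le c (fun ij => nacomp f n (z ij)) (fun ij => q ij.2) hδ.le
        (fun ij => by
          have := hz2 ij
          rw [Metric.mem_ball] at this
          rw [dist_comm]
          exact this.le) hcsum
    have h2 : dist D2 ν0 ≤ δ := by
      rw [dist_comm]
      show levyProkhorovDist (LevyProkhorov.toMeasureEquiv (α := ProbabilityMeasure X) ν0 : Measure X)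
        (disc v q) ≤ δ
      exact hdist2
    calc dist T ν0 ≤ dist T D2 + dist D2 ν0 := dist_triangle _ _ _
      _ ≤ δ + δ := add_le_add h1 h2
      _ < ε' := by linarith
  · -- induced mixing implies base mixing
    intro h U V hUopen hVopen hUne hVne
    obtain ⟨x, hx⟩ := hUne
    obtain ⟨y, hy⟩ := hVne
    obtain ⟨εx, hεx, hbx⟩ := Metric.isOpen_iff.1 hUopen x hx
    obtain ⟨εy, hεy, hby⟩ := Metric.isOpen_iff.1 hVopen y hy
    set ε : ℝ := min (min εx εy) 1 / 3 with hεdef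
    have hε : 0 < ε := by
      have h1 := lt_min (lt_min hεx hεy) one_pos
      simp only [hεdef]
      linarith
    have hε3 : ε ≤ 1 / 3 := by
      have := min_le_right (min εx εy) 1
      simp only [hεdef]
      linarith
    have hbx' : Metric.ball x ε ⊆ U := by
      refine le_trans (Metric.ball_subset_ball ?_) hbx
      have h1 := min_le_left εx εy
      have h2 := min_le_left (min εx εy) 1
      simp only [hεdef]
      linarith
    have hby' : Metric.ball y ε ⊆ V := by
      refine le_trans (Metric.ball_subset_ball ?_) hby
      have h1 := min_le_right εx εy
      have h2 := min_le_left (min εx εy) 1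
      simp only [hεdef]
      linarith
    set dx : LevyProkhorov (ProbabilityMeasure X) :=
      (LevyProkhorov.toMeasureEquiv (α := ProbabilityMeasure X)).symm ⟨Measure.dirac x, inferInstance⟩ with hdx
    set dy : LevyProkhorov (ProbabilityMeasure X) :=
      (LevyProkhorov.toMeasureEquiv (α := ProbabilityMeasure X)).symm ⟨Measure.dirac y, inferInstance⟩ with hdy
    obtain ⟨N, hN1, hN2⟩ := h (Metric.ball dx ε) (Metric.ball dy ε) Metric.isOpen_ball
      Metric.isOpen_ball ⟨dx, Metric.mem_ball_self hε⟩ ⟨dy, Metric.mem_ball_self hε⟩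
    refine ⟨N, hN1, fun n hn => ?_⟩
    obtain ⟨T, ⟨μh, hμU, hμT⟩, hTV⟩ := hN2 n hn
    have key : ∀ (ρ : Measure X), IsProbabilityMeasure ρ → ∀ (z : X) (W : Set X),
        MeasurableSet W → Metric.ball z ε ⊆ W →
        levyProkhorovDist (Measure.dirac z) ρ < ε → 1 ≤ ρ W + ENNReal.ofReal ε := by
      intro ρ hρ z W hW hsub hd
      have hne : levyProkhorovEDist (Measure.dirac z) ρ ≠ ⊤ := levyProkhorovEDist_ne_top _ _
      have hlt : levyProkhorovEDist (Measure.dirac z) ρ < ENNReal.ofReal ε :=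
        (ENNReal.lt_ofReal_iff_toReal_lt hne).2 hd
      have h1 := left_measure_le_of_levyProkhorovEDist_lt hlt (measurableSet_singleton z)
      rw [Measure.dirac_apply_of_mem (Set.mem_singleton z)] at h1
      refine le_trans h1 (add_le_add_left (measure_mono ?_) _)
      rw [ENNReal.toReal_ofReal hε.le, Metric.thickening_singleton]
      exact hsub
    set μm : Measure X := (LevyProkhorov.toMeasureEquiv (α := ProbabilityMeasure X) μh : Measure X) with hμm
    have hU1 : 1 ≤ μm U + ENNReal.ofReal ε := by
      refine key μm inferInstance x U hUopen.measurableSet hbx' ?_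
      have hd := Metric.mem_ball.1 hμU
      rw [dist_comm] at hd
      exact hd
    have hTmeas : (LevyProkhorov.toMeasureEquiv (α := ProbabilityMeasure X) T : Measure X)
        = μm.map (nacomp f n) := by
      rw [← hμT]
      exact nacomp_induced f hf n μh
    haveI : IsProbabilityMeasure (μm.map (nacomp f n)) :=
      Measure.isProbabilityMeasure_map ((nacomp_continuous hf n).measurable.aemeasurable)
    have hV1 : 1 ≤ (μm.map (nacomp f n)) V + ENNReal.ofReal ε := by
      refine key _ inferInstance y V hVopen.measurableSet hby' ?_
      have hd := Metric.mem_ball.1 hTV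
      rw [dist_comm] at hd
      rw [← hTmeas]
      exact hd
    have hpre : 1 ≤ μm ((nacomp f n) ⁻¹' V) + ENNReal.ofReal ε := by
      rwa [Measure.map_apply ((nacomp_continuous hf n).measurable) hVopen.measurableSet] at hV1
    have hinter : (U ∩ (nacomp f n) ⁻¹' V).Nonempty := by
      rw [Set.nonempty_iff_ne_empty]
      intro hemp
      have hdisj : Disjoint U ((nacomp f n) ⁻¹' V) := Set.disjoint_iff_inter_eq_empty.2 hemp
      have hle : μm U + μm ((nacomp f n) ⁻¹' V) ≤ 1 := by
        rw [← measure_union hdisj (((nacomp_continuous hf n).measurable) hVopen.measurableSet)]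
        exact prob_le_one
      have hsum2 : (2 : ENNReal) ≤ 1 + (ENNReal.ofReal ε + ENNReal.ofReal ε) := by
        calc (2 : ENNReal) = 1 + 1 := by norm_num
        _ ≤ (μm U + ENNReal.ofReal ε) + (μm ((nacomp f n) ⁻¹' V) + ENNReal.ofReal ε) :=
            add_le_add hU1 hpre
        _ = (μm U + μm ((nacomp f n) ⁻¹' V)) + (ENNReal.ofReal ε + ENNReal.ofReal ε) := by
            ring
        _ ≤ 1 + (ENNReal.ofReal ε + ENNReal.ofReal ε) := add_le_add_left hle _
      have hfin : (2 : ENNReal) ≤ ENNReal.ofReal (5 / 3) := by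
        have h23 : ENNReal.ofReal ε + ENNReal.ofReal ε ≤ ENNReal.ofReal (2 / 3) := by
          rw [← ENNReal.ofReal_add hε.le hε.le]
          exact ENNReal.ofReal_le_ofReal (by linarith)
        calc (2 : ENNReal) ≤ 1 + (ENNReal.ofReal ε + ENNReal.ofReal ε) := hsum2
        _ ≤ 1 + ENNReal.ofReal (2 / 3) := add_le_add_right h23 1
        _ = ENNReal.ofReal 1 + ENNReal.ofReal (2 / 3) := by rw [ENNReal.ofReal_one]
        _ = ENNReal.ofReal (5 / 3) := by
            rw [← ENNReal.ofReal_add (by norm_num) (by norm_num)]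
            norm_num
      have hlt : ENNReal.ofReal (5 / 3) < 2 := by
        rw [show (2 : ENNReal) = ENNReal.ofReal 2 by simp]
        exact (ENNReal.ofReal_lt_ofReal_iff (by norm_num)).2 (by norm_num)
      exact absurd hfin (not_le.2 hlt)
    obtain ⟨x0, hx0U, hx0V⟩ := hinter
    exact ⟨nacomp f n x0, ⟨x0, hx0U, rfl⟩, hx0V⟩
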